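/- Let $R \to R'$ be an injective integral extension of commutative rings (i.e., $R'$ is an $R$-algebra whose structure map is injective and integral), let $M$ be a finite free $R$-module, and let $x \in M$. Then the cyclic submodule $R \cdot x$ is a direct summand of $M$ (i.e., there exists an $R$-submodule $N$ of $M$ with $M = R\cdot x \oplus N$) if and only if the cyclic $R'$-submodule $R' \cdot (x \otimes 1)$ generated by the image of $x$ in $M \otimes_R R'$ is a direct summand of the $R'$-module $M \otimes_R R'$. -/

import Mathlib

open TensorProduct

/-- A cyclic submodule `span A {x}` of a projective module has a complement iff there is a
linear functional `φ` with `φ x • x = x`. -/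
lemma span_singleton_isCompl_iff {A : Type*} [CommRing A] {M : Type*} [AddCommGroup M]
    [Module A M] [Module.Projective A M] (x : M) :
    (∃ N : Submodule A M, IsCompl (Submodule.span A {x}) N) ↔
      ∃ φ : M →ₗ[A] A, φ x • x = x := by
  have hx : x ∈ Submodule.span A {x} := Submodule.mem_span_singleton_self x
  constructor
  · rintro ⟨N, hN⟩
    set p := Submodule.span A {x} with hp
    let f : A →ₗ[A] p := LinearMap.codRestrict p (LinearMap.toSpanSingleton A M x)
      (fun r => Submodule.smul_mem _ r hx)
    have hf : Function.Surjective f := by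
      rintro ⟨y, hy⟩
      obtain ⟨r, rfl⟩ := Submodule.mem_span_singleton.mp hy
      exact ⟨r, rfl⟩
    obtain ⟨φ, hφ⟩ := Module.projective_lifting_property f
      (Submodule.projectionOnto p N hN) hf
    refine ⟨φ, ?_⟩
    have h1 : f (φ x) = Submodule.projectionOnto p N hN x := by
      rw [← LinearMap.comp_apply, hφ]
    have h2 : Submodule.projectionOnto p N hN x = ⟨x, hx⟩ := by
      have := Submodule.projectionOnto_apply_left hN ⟨x, hx⟩
      simpa using this
    have := congrArg Subtype.val (h1.trans h2)
    exact this
  · rintro ⟨φ, hφ⟩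
    set p := Submodule.span A {x} with hp
    let π : M →ₗ[A] p := LinearMap.codRestrict p
      ((LinearMap.toSpanSingleton A M x).comp φ) (fun m => Submodule.smul_mem _ _ hx)
    have hπ : ∀ y : p, π y = y := by
      rintro ⟨y, hy⟩
      obtain ⟨r, rfl⟩ := Submodule.mem_span_singleton.mp hy
      apply Subtype.ext
      show φ (r • x) • x = r • x
      rw [map_smul, smul_eq_mul, mul_smul, hφ]
    exact ⟨LinearMap.ker π, LinearMap.isCompl_of_proj hπ⟩

/-- **Lemma 2.20.**  Let `R → R'` be an injective integral extension of commutative rings,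
`M` a finite free `R`-module, and `x ∈ M`.  Then `R • x` is a direct summand of `M`
(i.e. admits a complementary submodule) if and only if the cyclic `R'`-submodule generated
by the image of `x` in `R' ⊗[R] M` is a direct summand of the `R'`-module `R' ⊗[R] M`. -/
theorem stmt_2 (R R' : Type*) [CommRing R] [CommRing R'] [Algebra R R']
    (hinj : Function.Injective (algebraMap R R'))
    (hint : Algebra.IsIntegral R R')
    (M : Type*) [AddCommGroup M] [Module R M] [Module.Finite R M] [Module.Free R M]
    (x : M) :
    (∃ N : Submodule R M, IsCompl (Submodule.span R {x}) N) ↔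
      ∃ N' : Submodule R' (R' ⊗[R] M),
        IsCompl (Submodule.span R' {(1 : R') ⊗ₜ[R] x}) N' := by
  classical
  rw [span_singleton_isCompl_iff, span_singleton_isCompl_iff]
  constructor
  · rintro ⟨φ, hφ⟩
    refine ⟨LinearMap.liftBaseChange R' ((Algebra.linearMap R R').comp φ), ?_⟩
    rw [LinearMap.liftBaseChange_tmul]
    simp only [LinearMap.comp_apply, Algebra.linearMap_apply, one_smul]
    rw [algebraMap_smul, ← TensorProduct.tmul_smul, hφ]
  · rintro ⟨φ', hφ'⟩
    set ι := Module.Free.ChooseBasisIndex R M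
    set e : Module.Basis ι R M := Module.Free.chooseBasis R M with he
    set a : ι → R := fun i => e.repr x i with ha
    set I : Ideal R := Ideal.span (Set.range a) with hI
    set t' : R' := φ' ((1:R') ⊗ₜ[R] x) with ht'
    set b : ι → R' := fun i => φ' ((1:R') ⊗ₜ[R] e i) with hb
    set S : Subalgebra R R' := Algebra.adjoin R (Set.range b) with hS
    -- coordinate form of the hypothesis
    have hta : ∀ i, t' * algebraMap R R' (a i) = algebraMap R R' (a i) := by
      intro i
      have h := congrArg (fun v => (e.baseChange R').repr v i) hφ'
      simpa [map_smul, Module.Basis.baseChange_repr_tmul, Algebra.smul_def, smul_eq_mul,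
        mul_one] using h
    have htI : ∀ r ∈ I, t' * algebraMap R R' r = algebraMap R R' r := by
      intro r hr
      refine Submodule.span_induction ?_ ?_ ?_ ?_ hr
      · rintro _ ⟨i, rfl⟩; exact hta i
      · simp
      · intro y z _ _ hy hz
        rw [map_add, mul_add, hy, hz]
      · intro c y _ hy
        rw [smul_eq_mul, map_mul, ← mul_assoc, mul_comm t', mul_assoc, hy]
    -- the image of x in R' ⊗ M decomposes as ∑ aᵢ • (1 ⊗ eᵢ)
    have hxsum : ((1:R') ⊗ₜ[R] x) = ∑ i, a i • ((1:R') ⊗ₜ[R] e i) := by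
      conv_lhs => rw [← e.sum_repr x]
      rw [tmul_sum]
      exact Finset.sum_congr rfl fun i _ => by rw [tmul_smul]
    have ht'sum : t' = ∑ i, a i • b i := by
      rw [ht', hxsum, map_sum]
      exact Finset.sum_congr rfl fun i _ => by rw [LinearMap.map_smul_of_tower]
    have ht'mem : t' ∈ I • (Subalgebra.toSubmodule S) := by
      rw [ht'sum]
      refine Submodule.sum_mem _ fun i _ => Submodule.smul_mem_smul ?_ ?_
      · exact Ideal.subset_span ⟨i, rfl⟩
      · exact Algebra.subset_adjoin ⟨i, rfl⟩
    -- multiplication by an element of S preserves I • S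
    have hmulS : ∀ s ∈ S, ∀ n ∈ I • (Subalgebra.toSubmodule S),
        s * n ∈ I • (Subalgebra.toSubmodule S) := by
      intro s hs n hn
      refine Submodule.smul_induction_on hn ?_ ?_
      · intro r hr u hu
        have : s * (r • u) = r • (s * u) := by
          rw [Algebra.smul_def, Algebra.smul_def]; ring
        rw [this]
        exact Submodule.smul_mem_smul hr (S.mul_mem hs hu)
      · intro y z hy hz
        rw [mul_add]
        exact Submodule.add_mem _ hy hz
    -- N ≤ I • N for N = I • S
    have hNle : I • (Subalgebra.toSubmodule S) ≤ I • (I • (Subalgebra.toSubmodule S)) := by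
      refine Submodule.smul_le.mpr fun r hr s hs => ?_
      have key : r • s = r • (s * t') := by
        have h2 : (algebraMap R R' r) * (s * t') = (algebraMap R R' r) * s := by
          calc (algebraMap R R' r) * (s * t') = (t' * algebraMap R R' r) * s := by ring
          _ = (algebraMap R R' r) * s := by rw [htI r hr]
        rw [Algebra.smul_def, Algebra.smul_def]
        exact h2.symm
      rw [key]
      exact Submodule.smul_mem_smul hr (hmulS s hs t' ht'mem)
    -- N is finitely generated
    have hSfg : (Subalgebra.toSubmodule S).FG :=
      fg_adjoin_of_finite (Set.finite_range b) fun y _ => Algebra.IsIntegral.isIntegral y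
    have hNfg : (I • (Subalgebra.toSubmodule S)).FG := by
      obtain ⟨T, hT⟩ := hSfg
      refine Submodule.fg_def.mpr ⟨⋃ (s ∈ Set.range a) (t ∈ (T : Set R')), {s • t}, ?_, ?_⟩
      · have : (⋃ (s ∈ Set.range a) (t ∈ (T : Set R')), {s • t})
            = Set.image2 (· • ·) (Set.range a) (T : Set R') := by
          ext z
          simp [Set.mem_image2, Set.mem_smul, eq_comm]
        rw [this]
        exact Set.Finite.image2 _ (Set.finite_range a) T.finite_toSet
      · rw [open Pointwise in show (⋃ (s ∈ Set.range a) (t ∈ (T : Set R')), {s • t}) = Set.range a • (T : Set R') by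
          ext z; simp [Set.mem_smul, eq_comm]]
        rw [← Submodule.span_smul_span, hI, hT]
    obtain ⟨r, hr1, hr0⟩ :=
      Submodule.exists_sub_one_mem_and_smul_eq_zero_of_fg_of_le_smul I _ hNfg hNle
    -- conclude r * aᵢ = 0
    have ha0 : ∀ i, r * a i = 0 := by
      intro i
      have hmem : algebraMap R R' (a i) ∈ I • (Subalgebra.toSubmodule S) := by
        have : algebraMap R R' (a i) = a i • (1:R') := by
          rw [Algebra.smul_def, mul_one]
        rw [this]
        exact Submodule.smul_mem_smul (Ideal.subset_span ⟨i, rfl⟩) S.one_mem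
      have h0 : r • algebraMap R R' (a i) = 0 := hr0 _ hmem
      apply hinj
      rw [map_mul, map_zero, ← Algebra.smul_def]
      exact h0
    have htmem : (1 : R) - r ∈ I := by
      have := I.neg_mem hr1
      simpa using this
    obtain ⟨u, hu⟩ := (Finsupp.mem_span_range_iff_exists_finsupp.mp htmem)
    -- r • x = 0
    have hrx : r • x = 0 := by
      have : e.repr (r • x) = 0 := by
        ext i
        rw [map_smul]
        simpa [smul_eq_mul] using ha0 i
      have := congrArg (e.repr.symm) this
      simpa using this
    refine ⟨u.sum fun i c => c • e.coord i, ?_⟩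
    have hφx : (u.sum fun i c => c • e.coord i) x = 1 - r := by
      rw [← hu]
      rw [Finsupp.sum, Finsupp.sum, LinearMap.sum_apply]
      refine Finset.sum_congr rfl fun i _ => ?_
      rw [LinearMap.smul_apply, Module.Basis.coord_apply, smul_eq_mul]
    rw [hφx, sub_smul, one_smul, hrx, sub_zero]
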